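/- arXiv:2401.10142 — 2 statements merged into one kernel-verified Lean document; each statement's English description precedes it below -/
import Mathlib

section
/- The revival destruction capacity is faithful: for every d×d unitary W one has D(W) ≥ 0, and D(W) = 0 if and only if W is a free unitary. -/
open Matrix Complex

noncomputable section

/-- Time-evolution unitary `U(t) = exp(-i t H)`. -/
def Uevol {d : ℕ} (H : Matrix (Fin d) (Fin d) ℂ) (t : ℝ) : Matrix (Fin d) (Fin d) ℂ :=
  NormedSpace.exp ((-(Complex.I * (t : ℂ))) • H)

/-- Revival fidelity `F_R(ψ) = |⟨ψ, U(2πT)ψ⟩|`. -/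
def FR {d : ℕ} (H : Matrix (Fin d) (Fin d) ℂ) (T : ℕ) (x : Fin d → ℂ) : ℝ :=
  ‖star x ⬝ᵥ (Uevol H (2 * Real.pi * T) *ᵥ x)‖

/-- A free pure state: a unit vector with perfect revival. -/
def IsFreeState {d : ℕ} (H : Matrix (Fin d) (Fin d) ℂ) (T : ℕ) (x : Fin d → ℂ) : Prop :=
  star x ⬝ᵥ x = 1 ∧ FR H T x = 1

/-- A free unitary: a unitary matrix mapping every free pure state to a free pure state. -/
def IsFreeUnitary {d : ℕ} (H : Matrix (Fin d) (Fin d) ℂ) (T : ℕ)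
    (V : Matrix (Fin d) (Fin d) ℂ) : Prop :=
  V ∈ Matrix.unitaryGroup (Fin d) ℂ ∧
    ∀ x : Fin d → ℂ, IsFreeState H T x → IsFreeState H T (V *ᵥ x)

/-- Non-revival monotone `R(ψ) = sup over free unitaries V of (1 - F_R(Vψ))`. -/
def Rmono {d : ℕ} (H : Matrix (Fin d) (Fin d) ℂ) (T : ℕ) (x : Fin d → ℂ) : ℝ :=
  ⨆ V : {V : Matrix (Fin d) (Fin d) ℂ // IsFreeUnitary H T V}, (1 - FR H T (V.1 *ᵥ x))

/-- Revival destruction capacity `D(W) = sup over free states ψ of R(Wψ)`. -/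
def Dcap {d : ℕ} (H : Matrix (Fin d) (Fin d) ℂ) (T : ℕ) (W : Matrix (Fin d) (Fin d) ℂ) : ℝ :=
  ⨆ x : {x : Fin d → ℂ // IsFreeState H T x}, Rmono H T (W *ᵥ x.1)

/-! ### Auxiliary lemmas -/

/-- The matrix exponential acts on eigenvectors by scalar exponentiation. -/
theorem exp_mulVec_eigen {d : ℕ} (M : Matrix (Fin d) (Fin d) ℂ) (v : Fin d → ℂ) (c : ℂ)
    (h : M *ᵥ v = c • v) :
    NormedSpace.exp M *ᵥ v = Complex.exp c • v := by
  letI : SeminormedRing (Matrix (Fin d) (Fin d) ℂ) := Matrix.linftyOpSemiNormedRing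
  letI : NormedRing (Matrix (Fin d) (Fin d) ℂ) := Matrix.linftyOpNormedRing
  letI : NormedAlgebra ℂ (Matrix (Fin d) (Fin d) ℂ) := Matrix.linftyOpNormedAlgebra
  have hpow : ∀ n : ℕ, M ^ n *ᵥ v = c ^ n • v := by
    intro n
    induction n with
    | zero => simp
    | succ n ih =>
      rw [pow_succ, ← Matrix.mulVec_mulVec, h, Matrix.mulVec_smul, ih, smul_smul, ← pow_succ']
  let L : Matrix (Fin d) (Fin d) ℂ →ₗ[ℂ] (Fin d → ℂ) :=
    { toFun := fun N => N *ᵥ v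
      map_add' := fun N₁ N₂ => Matrix.add_mulVec N₁ N₂ v
      map_smul' := fun a N => Matrix.smul_mulVec a N v }
  have hsum : Summable fun n : ℕ => ((n.factorial : ℂ))⁻¹ • M ^ n := NormedSpace.expSeries_summable' M
  have hmap := L.toContinuousLinearMap.map_tsum hsum
  have hsum2 : Summable fun n : ℕ => ((n.factorial : ℂ))⁻¹ * c ^ n := by
    simpa [smul_eq_mul] using NormedSpace.expSeries_summable' (𝕂 := ℂ) c
  have h1 : NormedSpace.exp M *ᵥ v = ∑' n : ℕ, (((n.factorial : ℂ))⁻¹ • M ^ n) *ᵥ v := by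
    rw [NormedSpace.exp_eq_tsum ℂ]
    exact hmap
  have h2 : ∀ n : ℕ, (((n.factorial : ℂ))⁻¹ • M ^ n) *ᵥ v = (((n.factorial : ℂ))⁻¹ * c ^ n) • v := by
    intro n
    rw [Matrix.smul_mulVec, hpow, smul_smul]
  rw [h1, tsum_congr h2, hsum2.tsum_smul_const]
  congr 1
  rw [Complex.exp_eq_exp_ℂ, NormedSpace.exp_eq_tsum ℂ]
  simp [smul_eq_mul]

/-- `U(t)` is unitary for Hermitian `H`. -/
theorem Uevol_mem_unitaryGroup {d : ℕ} (H : Matrix (Fin d) (Fin d) ℂ) (hH : H.IsHermitian)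
    (t : ℝ) : Uevol H t ∈ Matrix.unitaryGroup (Fin d) ℂ := by
  letI : SeminormedRing (Matrix (Fin d) (Fin d) ℂ) := Matrix.linftyOpSemiNormedRing
  letI : NormedRing (Matrix (Fin d) (Fin d) ℂ) := Matrix.linftyOpNormedRing
  letI : NormedAlgebra ℂ (Matrix (Fin d) (Fin d) ℂ) := Matrix.linftyOpNormedAlgebra
  have hs : (-(Complex.I * (t : ℂ))) • H ∈ skewAdjoint (Matrix (Fin d) (Fin d) ℂ) := by
    rw [skewAdjoint.mem_iff, star_smul]
    have hH' : star H = H := hH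
    rw [hH']
    rw [← neg_smul]
    congr 1
    simp [Complex.ext_iff]
  letI : NormedAlgebra ℚ (Matrix (Fin d) (Fin d) ℂ) := NormedAlgebra.restrictScalars ℚ ℂ _
  letI : @ContinuousStar (Matrix (Fin d) (Fin d) ℂ) (@UniformSpace.toTopologicalSpace _ (@PseudoMetricSpace.toUniformSpace _ (@SeminormedRing.toPseudoMetricSpace _ (NormedRing.toSeminormedRing)))) _ := ⟨continuous_id.matrix_conjTranspose⟩
  exact NormedSpace.exp_mem_unitary_of_mem_skewAdjoint hs

/-- Unitaries preserve the (sesquilinear) self dot product. -/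
theorem unitary_dot {d : ℕ} (V : Matrix (Fin d) (Fin d) ℂ)
    (hV : V ∈ Matrix.unitaryGroup (Fin d) ℂ) (x : Fin d → ℂ) :
    star (V *ᵥ x) ⬝ᵥ (V *ᵥ x) = star x ⬝ᵥ x := by
  have h1 : star V * V = 1 := (Matrix.mem_unitaryGroup_iff'.mp hV)
  rw [Matrix.star_mulVec, ← Matrix.dotProduct_mulVec, Matrix.mulVec_mulVec,
    Matrix.star_eq_conjTranspose] at *
  rw [show Vᴴ * V = 1 from h1, Matrix.one_mulVec]

/-- Cauchy–Schwarz for the dot product of unit vectors. -/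
theorem abs_dot_le_one {d : ℕ} (x y : Fin d → ℂ) (hx : star x ⬝ᵥ x = 1)
    (hy : star y ⬝ᵥ y = 1) : ‖star x ⬝ᵥ y‖ ≤ 1 := by
  let x' : EuclideanSpace ℂ (Fin d) := WithLp.toLp 2 x
  let y' : EuclideanSpace ℂ (Fin d) := WithLp.toLp 2 y
  have hxy : (inner ℂ x' y' : ℂ) = star x ⬝ᵥ y := by
    rw [EuclideanSpace.inner_toLp_toLp, dotProduct_comm]
  have hxx : (inner ℂ x' x' : ℂ) = 1 := by
    rw [EuclideanSpace.inner_toLp_toLp, dotProduct_comm]; exact hx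
  have hyy : (inner ℂ y' y' : ℂ) = 1 := by
    rw [EuclideanSpace.inner_toLp_toLp, dotProduct_comm]; exact hy
  have hnx : ‖x'‖ ^ 2 = 1 := by
    have h := inner_self_eq_norm_sq (𝕜 := ℂ) x'
    rw [hxx] at h
    simpa using h.symm
  have hny : ‖y'‖ ^ 2 = 1 := by
    have h := inner_self_eq_norm_sq (𝕜 := ℂ) y'
    rw [hyy] at h
    simpa using h.symm
  have hcs : ‖(inner ℂ x' y' : ℂ)‖ ≤ ‖x'‖ * ‖y'‖ := norm_inner_le_norm x' y'
  rw [hxy] at hcs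
  nlinarith [norm_nonneg x', norm_nonneg y', sq_nonneg (‖x'‖ - 1), sq_nonneg (‖y'‖ - 1),
    norm_nonneg (star x ⬝ᵥ y)]

/-- Revival fidelity of a unit vector is at most 1. -/
theorem FR_le_one {d : ℕ} (H : Matrix (Fin d) (Fin d) ℂ) (hH : H.IsHermitian) (T : ℕ)
    (x : Fin d → ℂ) (hx : star x ⬝ᵥ x = 1) : FR H T x ≤ 1 := by
  have hy : star (Uevol H (2 * Real.pi * T) *ᵥ x) ⬝ᵥ (Uevol H (2 * Real.pi * T) *ᵥ x) = 1 := by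
    rw [unitary_dot _ (Uevol_mem_unitaryGroup H hH _) x, hx]
  exact abs_dot_le_one x _ hx hy

/-- Any unit eigenvector is a free state. -/
theorem eigen_isFreeState {d : ℕ} (H : Matrix (Fin d) (Fin d) ℂ) (T : ℕ) (v : Fin d → ℂ)
    (e : ℝ) (hv : star v ⬝ᵥ v = 1) (he : H *ᵥ v = (e : ℂ) • v) : IsFreeState H T v := by
  refine ⟨hv, ?_⟩
  have hc : ((-(Complex.I * ((2 * Real.pi * T : ℝ) : ℂ))) • H) *ᵥ v
      = ((-(Complex.I * ((2 * Real.pi * T : ℝ) : ℂ))) * e) • v := by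
    rw [Matrix.smul_mulVec, he, smul_smul]
  unfold FR Uevol
  rw [exp_mulVec_eigen _ _ _ hc, dotProduct_smul, hv, smul_eq_mul, mul_one,
    Complex.norm_exp]
  simp

/-- The identity is a free unitary. -/
theorem one_isFreeUnitary {d : ℕ} (H : Matrix (Fin d) (Fin d) ℂ) (T : ℕ) :
    IsFreeUnitary H T (1 : Matrix (Fin d) (Fin d) ℂ) := by
  refine ⟨Submonoid.one_mem _, fun x hx => ?_⟩
  rwa [Matrix.one_mulVec]

theorem revival_destruction_capacity_faithful
    (d : ℕ) (hd : 2 ≤ d)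
    (H : Matrix (Fin d) (Fin d) ℂ) (hH : H.IsHermitian)
    (ψ : Fin d → Fin d → ℂ) (E : Fin d → ℝ)
    (horth : ∀ i j : Fin d, star (ψ i) ⬝ᵥ ψ j = if i = j then 1 else 0)
    (heig : ∀ i : Fin d, H *ᵥ ψ i = (E i : ℂ) • ψ i)
    (T : ℕ) (hT : 0 < T)
    (A B : Finset (Fin d))
    (hdisj : Disjoint A B) (hcover : A ∪ B = Finset.univ)
    (hArat : ∀ i ∈ A, ∃ m : ℤ, E i * (T : ℝ) = (m : ℝ))
    (hBirr : ∀ i ∈ B, Irrational (E i))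
    (hBdiff : ∀ i ∈ B, ∀ j ∈ B, i ≠ j → Irrational (E i - E j))
    (hAcard : 1 < A.card) (hBcard : 1 < B.card)
    (W : Matrix (Fin d) (Fin d) ℂ) (hW : W ∈ Matrix.unitaryGroup (Fin d) ℂ) :
    0 ≤ Dcap H T W ∧ (Dcap H T W = 0 ↔ IsFreeUnitary H T W) := by
  have hdpos : 0 < d := lt_of_lt_of_le (by norm_num) hd
  set i0 : Fin d := ⟨0, hdpos⟩ with hi0
  have hψ0 : star (ψ i0) ⬝ᵥ ψ i0 = 1 := by
    rw [horth i0 i0, if_pos rfl]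
  have hfree0 : IsFreeState H T (ψ i0) := eigen_isFreeState H T (ψ i0) (E i0) hψ0 (heig i0)
  haveI hS : Nonempty {x : Fin d → ℂ // IsFreeState H T x} := ⟨⟨ψ i0, hfree0⟩⟩
  haveI hUne : Nonempty {V : Matrix (Fin d) (Fin d) ℂ // IsFreeUnitary H T V} :=
    ⟨⟨1, one_isFreeUnitary H T⟩⟩
  -- boundedness of the Rmono index family
  have hRbdd : ∀ y : Fin d → ℂ,
      BddAbove (Set.range fun V : {V : Matrix (Fin d) (Fin d) ℂ // IsFreeUnitary H T V} =>
        1 - FR H T (V.1 *ᵥ y)) := by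
    intro y
    refine ⟨1, ?_⟩
    rintro r ⟨V, rfl⟩
    have : (0 : ℝ) ≤ FR H T (V.1 *ᵥ y) := norm_nonneg _
    show 1 - FR H T (V.1 *ᵥ y) ≤ 1
    linarith
  have hRle_one : ∀ y : Fin d → ℂ, Rmono H T y ≤ 1 := by
    intro y
    refine ciSup_le fun V => ?_
    have : (0 : ℝ) ≤ FR H T (V.1 *ᵥ y) := norm_nonneg _
    show 1 - FR H T (V.1 *ᵥ y) ≤ 1
    linarith
  have hDbdd : BddAbove (Set.range fun x : {x : Fin d → ℂ // IsFreeState H T x} =>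
      Rmono H T (W *ᵥ x.1)) := by
    refine ⟨1, ?_⟩
    rintro r ⟨x, rfl⟩
    exact hRle_one _
  -- FR(W x) ≤ 1 for free x, and Rmono(Wx) ≥ 1 - FR(Wx) ≥ 0
  have hWxunit : ∀ x : Fin d → ℂ, IsFreeState H T x → star (W *ᵥ x) ⬝ᵥ (W *ᵥ x) = 1 := by
    intro x hx
    rw [unitary_dot W hW x, hx.1]
  have hkey : ∀ x : Fin d → ℂ, IsFreeState H T x →
      1 - FR H T (W *ᵥ x) ≤ Rmono H T (W *ᵥ x) := by
    intro x hx
    have h := le_ciSup (hRbdd (W *ᵥ x)) (⟨1, one_isFreeUnitary H T⟩ :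
      {V : Matrix (Fin d) (Fin d) ℂ // IsFreeUnitary H T V})
    rwa [Matrix.one_mulVec] at h
  have hRnonneg : ∀ x : Fin d → ℂ, IsFreeState H T x → 0 ≤ Rmono H T (W *ᵥ x) := by
    intro x hx
    have h1 : FR H T (W *ᵥ x) ≤ 1 := FR_le_one H hH T _ (hWxunit x hx)
    have h2 := hkey x hx
    linarith
  have hDge : ∀ x : Fin d → ℂ, ∀ hx : IsFreeState H T x, Rmono H T (W *ᵥ x) ≤ Dcap H T W := by
    intro x hx
    exact le_ciSup hDbdd (⟨x, hx⟩ : {x : Fin d → ℂ // IsFreeState H T x})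
  refine ⟨le_trans (hRnonneg _ hfree0) (hDge _ hfree0), ?_, ?_⟩
  · -- Dcap = 0 → W free
    intro h0
    refine ⟨hW, fun x hx => ?_⟩
    refine ⟨hWxunit x hx, ?_⟩
    have h1 : Rmono H T (W *ᵥ x) ≤ 0 := h0 ▸ hDge x hx
    have h2 := hkey x hx
    have h3 : FR H T (W *ᵥ x) ≤ 1 := FR_le_one H hH T _ (hWxunit x hx)
    linarith
  · -- W free → Dcap = 0
    intro hWfree
    have hzero : ∀ x : {x : Fin d → ℂ // IsFreeState H T x}, Rmono H T (W *ᵥ x.1) = 0 := by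
      intro x
      have hterm : ∀ V : {V : Matrix (Fin d) (Fin d) ℂ // IsFreeUnitary H T V},
          1 - FR H T (V.1 *ᵥ (W *ᵥ x.1)) = 0 := by
        intro V
        have h := (V.2.2 _ (hWfree.2 _ x.2)).2
        rw [h]; ring
      rw [Rmono, iSup_congr hterm, ciSup_const]
    rw [Dcap, iSup_congr hzero, ciSup_const]
end
end

section
/- Let d = 2^n, let P and Q be n-qubit Pauli operators, let V be any d×d unitary matrix, and set A = V*PV. Then (1/d)·tr(A·Q·A·Q) is a real number and satisfies (1/d)·tr(A·Q·A·Q) ≥ 2·((1/d)·tr(A·Q))² − 1. -/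
open Matrix Complex

noncomputable section

/-- The four 1-qubit Pauli matrices `I₂, σx, σy, σz`. -/
def pauliMat : Fin 4 → Matrix (Fin 2) (Fin 2) ℂ :=
  ![1, !![0, 1; 1, 0], !![0, -Complex.I; Complex.I, 0], !![1, 0; 0, -1]]

/-- The n-fold Kronecker product `P₁ ⊗ ⋯ ⊗ Pₙ` of 2×2 matrices, as a `2^n × 2^n` matrix. -/
def pauliString {n : ℕ} (P : Fin n → Matrix (Fin 2) (Fin 2) ℂ) :
    Matrix (Fin (2 ^ n)) (Fin (2 ^ n)) ℂ :=
  Matrix.of fun x y =>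
    ∏ k : Fin n, P k (finFunctionFinEquiv.symm x k) (finFunctionFinEquiv.symm y k)

/-- An n-qubit Pauli operator: a Kronecker product of 1-qubit Pauli matrices. -/
def IsPauli {n : ℕ} (O : Matrix (Fin (2 ^ n)) (Fin (2 ^ n)) ℂ) : Prop :=
  ∃ P : Fin n → Matrix (Fin 2) (Fin 2) ℂ,
    (∀ k, ∃ a : Fin 4, P k = pauliMat a) ∧ O = pauliString P

lemma pauliMat_hermitian (a : Fin 4) : (pauliMat a)ᴴ = pauliMat a := by
  fin_cases a <;>
  · ext i j
    fin_cases i <;> fin_cases j <;>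
      simp [pauliMat, Matrix.conjTranspose_apply, Matrix.one_apply, Complex.ext_iff]

lemma pauliMat_mul_self (a : Fin 4) : pauliMat a * pauliMat a = 1 := by
  fin_cases a <;>
  · ext i j
    fin_cases i <;> fin_cases j <;>
      simp [pauliMat, Matrix.mul_apply, Fin.sum_univ_two, Matrix.one_apply, Complex.ext_iff]

variable {n : ℕ}

lemma pauliString_conjTranspose (P : Fin n → Matrix (Fin 2) (Fin 2) ℂ)
    (h : ∀ k, (P k)ᴴ = P k) : (pauliString P)ᴴ = pauliString P := by
  ext x y
  simp only [Matrix.conjTranspose_apply, pauliString, Matrix.of_apply, star_prod]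
  refine Finset.prod_congr rfl fun k _ => ?_
  conv_rhs => rw [← h k]
  simp [Matrix.conjTranspose_apply]

lemma pauliString_mul (P Q : Fin n → Matrix (Fin 2) (Fin 2) ℂ) :
    pauliString P * pauliString Q = pauliString (fun k => P k * Q k) := by
  ext x y
  simp only [Matrix.mul_apply, pauliString, Matrix.of_apply, Fintype.prod_sum]
  rw [← Equiv.sum_comp (finFunctionFinEquiv (m := 2) (n := n))]
  simp [Finset.prod_mul_distrib]

lemma pauliString_one : pauliString (fun _ : Fin n => (1 : Matrix (Fin 2) (Fin 2) ℂ)) = 1 := by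
  ext x y
  simp only [pauliString, Matrix.of_apply]
  rcases eq_or_ne x y with h | h
  · subst h; simp [Matrix.one_apply]
  · rw [Matrix.one_apply_ne h]
    obtain ⟨k, hk⟩ : ∃ k, finFunctionFinEquiv.symm x k ≠ finFunctionFinEquiv.symm y k := by
      by_contra hc
      push_neg at hc
      exact h (finFunctionFinEquiv.symm.injective (funext hc))
    exact Finset.prod_eq_zero (Finset.mem_univ k) (by simp [Matrix.one_apply, hk])

lemma IsPauli.hermitian {O : Matrix (Fin (2 ^ n)) (Fin (2 ^ n)) ℂ} (h : IsPauli O) :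
    Oᴴ = O := by
  obtain ⟨P, hP, rfl⟩ := h
  exact pauliString_conjTranspose P fun k => by
    obtain ⟨a, ha⟩ := hP k; rw [ha]; exact pauliMat_hermitian a

lemma IsPauli.mul_self {O : Matrix (Fin (2 ^ n)) (Fin (2 ^ n)) ℂ} (h : IsPauli O) :
    O * O = 1 := by
  obtain ⟨P, hP, rfl⟩ := h
  rw [pauliString_mul]
  have : (fun k => P k * P k) = fun _ : Fin n => (1 : Matrix (Fin 2) (Fin 2) ℂ) := by
    funext k; obtain ⟨a, ha⟩ := hP k; rw [ha]; exact pauliMat_mul_self a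
  rw [this, pauliString_one]

lemma IsPauli.unitary {O : Matrix (Fin (2 ^ n)) (Fin (2 ^ n)) ℂ} (h : IsPauli O) :
    O ∈ Matrix.unitaryGroup (Fin (2 ^ n)) ℂ := by
  rw [Matrix.mem_unitaryGroup_iff]
  show O * Oᴴ = 1
  rw [h.hermitian, h.mul_self]


theorem evolved_pauli_otoc_lower_bound
    (n : ℕ) (hn : 1 ≤ n)
    (P Q : Matrix (Fin (2 ^ n)) (Fin (2 ^ n)) ℂ) (hP : IsPauli P) (hQ : IsPauli Q)
    (V : Matrix (Fin (2 ^ n)) (Fin (2 ^ n)) ℂ)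
    (hV : V ∈ Matrix.unitaryGroup (Fin (2 ^ n)) ℂ)
    (A : Matrix (Fin (2 ^ n)) (Fin (2 ^ n)) ℂ) (hA : A = Vᴴ * P * V) :
    ((A * Q * A * Q).trace / ((2 ^ n : ℕ) : ℂ)).im = 0 ∧
    2 * (((A * Q).trace / ((2 ^ n : ℕ) : ℂ)).re) ^ 2 - 1 ≤
      ((A * Q * A * Q).trace / ((2 ^ n : ℕ) : ℂ)).re := by
  have hAH : Aᴴ = A := by
    rw [hA]
    simp [Matrix.conjTranspose_mul, hP.hermitian, Matrix.mul_assoc]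
  have hAU : A ∈ Matrix.unitaryGroup (Fin (2 ^ n)) ℂ := by
    rw [hA, ← Matrix.star_eq_conjTranspose]
    exact mul_mem (mul_mem (Unitary.star_mem hV) hP.unitary) hV
  set M : Matrix (Fin (2 ^ n)) (Fin (2 ^ n)) ℂ := A * Q with hMdef
  have hMU : M ∈ Matrix.unitaryGroup (Fin (2 ^ n)) ℂ := mul_mem hAU hQ.unitary
  have hMs : star M = Q * A := by
    rw [hMdef, Matrix.star_eq_conjTranspose, Matrix.conjTranspose_mul, hQ.hermitian, hAH]
  have h1 : M * star M = 1 := Matrix.mem_unitaryGroup_iff.mp hMU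
  have h2 : star M * M = 1 := Matrix.mem_unitaryGroup_iff'.mp hMU
  have hMM : A * Q * A * Q = M * M := by rw [hMdef]; noncomm_ring
  -- trace of M is real
  have htM : star M.trace = M.trace := by
    rw [← Matrix.star_eq_conjTranspose] at hAH
    calc star M.trace = (star M).trace := by
          rw [Matrix.star_eq_conjTranspose, Matrix.trace_conjTranspose]
      _ = (Q * A).trace := by rw [hMs]
      _ = M.trace := by rw [Matrix.trace_mul_comm]
  -- trace of M*M is real
  have htMM : star (M * M).trace = (M * M).trace := by
    calc star (M * M).trace = (star (M * M)).trace := by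
          rw [Matrix.star_eq_conjTranspose, Matrix.trace_conjTranspose]
      _ = ((Q * A) * (Q * A)).trace := by rw [StarMul.star_mul, hMs]
      _ = (Q * (A * (Q * A))).trace := by rw [Matrix.mul_assoc]
      _ = ((A * (Q * A)) * Q).trace := Matrix.trace_mul_comm _ _
      _ = (M * M).trace := by rw [hMdef]; noncomm_ring
  have himMM : (M * M).trace.im = 0 := Complex.conj_eq_iff_im.mp htMM
  have himM : M.trace.im = 0 := Complex.conj_eq_iff_im.mp htM
  refine ⟨by rw [hMM, Complex.div_natCast_im, himMM, zero_div], ?_⟩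
  -- the Hermitian matrix H = M + M†
  set H : Matrix (Fin (2 ^ n)) (Fin (2 ^ n)) ℂ := M + star M with hHdef
  have hHherm : star H = H := by rw [hHdef, star_add, star_star, add_comm]
  have hHdiag : ∀ i, (H i i).im = 0 := by
    intro i
    apply Complex.conj_eq_iff_im.mp
    have := congrFun (congrFun hHherm i) i
    rwa [Matrix.star_eq_conjTranspose, Matrix.conjTranspose_apply] at this
  set t : ℝ := M.trace.re with ht
  set s : ℝ := (M * M).trace.re with hs
  -- diagonal sum
  have hdiagsum : ∑ i, (H i i).re = 2 * t := by
    have : H.trace = M.trace + star M.trace := by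
      rw [hHdef, Matrix.trace_add, Matrix.star_eq_conjTranspose, Matrix.trace_conjTranspose]
    have hre : H.trace.re = 2 * t := by
      rw [this]; simp [Complex.add_re, ht]; ring
    rw [← hre, Matrix.trace]
    simpa using (Complex.re_sum Finset.univ fun i => H.diag i).symm
  -- Frobenius norm identity
  have hHH : H * H = M * M + star M * star M + (M * star M + star M * M) := by
    rw [hHdef]
    noncomm_ring
  have htrHH : (H * H).trace = (M * M).trace + star (M * M).trace + 2 * ((2 ^ n : ℕ) : ℂ) := by
    rw [hHH, ← StarMul.star_mul, Matrix.trace_add, Matrix.trace_add, Matrix.trace_add, h1, h2,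
      Matrix.trace_one, Matrix.star_eq_conjTranspose, Matrix.trace_conjTranspose]
    simp only [Fintype.card_fin]
    push_cast
    ring
  have hfrob : ∑ i, ∑ j, Complex.normSq (H i j) = 2 * s + 2 * (2 ^ n : ℝ) := by
    have e2 : (H * H).trace = ∑ i, ∑ j, (Complex.normSq (H i j) : ℂ) := by
      rw [show H * H = star H * H from by rw [hHherm]]
      simp only [Matrix.trace, Matrix.diag, Matrix.mul_apply, Matrix.star_eq_conjTranspose,
        Matrix.conjTranspose_apply]
      rw [Finset.sum_comm]
      refine Finset.sum_congr rfl fun i _ => Finset.sum_congr rfl fun j _ => ?_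
      exact (Complex.normSq_eq_conj_mul_self (z := H i j)).symm
    have := htrHH.symm.trans e2
    have := congrArg Complex.re this
    simp only [Complex.add_re, Complex.ofReal_re] at this
    rw [Complex.re_sum] at this
    simp only [Complex.re_sum, Complex.ofReal_re] at this
    rw [← this, htMM]
    simp only [Complex.mul_re, Complex.natCast_re, Complex.natCast_im, Complex.re_ofNat,
      Complex.im_ofNat, hs]
    push_cast
    ring
  -- Cauchy-Schwarz on the diagonal
  have cheb : (∑ i, (H i i).re) ^ 2 ≤ (2 ^ n : ℝ) * ∑ i, ((H i i).re) ^ 2 := by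
    have := sq_sum_le_card_mul_sum_sq (s := (Finset.univ : Finset (Fin (2 ^ n))))
      (f := fun i => (H i i).re)
    simpa using this
  have diag_le : ∑ i, ((H i i).re) ^ 2 ≤ ∑ i, ∑ j, Complex.normSq (H i j) := by
    refine Finset.sum_le_sum fun i _ => ?_
    calc ((H i i).re) ^ 2 ≤ Complex.normSq (H i i) := by
          rw [Complex.normSq_apply]; nlinarith [sq_nonneg (H i i).im]
      _ ≤ ∑ j, Complex.normSq (H i j) :=
          Finset.single_le_sum (fun j _ => Complex.normSq_nonneg _) (Finset.mem_univ i)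
  have key : (2 * t) ^ 2 ≤ (2 ^ n : ℝ) * (2 * s + 2 * (2 ^ n : ℝ)) := by
    rw [← hdiagsum, ← hfrob]
    exact cheb.trans (mul_le_mul_of_nonneg_left diag_le (by positivity))
  have d0 : (0 : ℝ) < (2 ^ n : ℝ) := by positivity
  have final : 2 * (t / (2 ^ n : ℝ)) ^ 2 - 1 ≤ s / (2 ^ n : ℝ) := by
    rw [← sub_nonneg]
    have expand : s / (2 ^ n : ℝ) - (2 * (t / (2 ^ n : ℝ)) ^ 2 - 1)
        = ((2 ^ n : ℝ) * (2 * s + 2 * (2 ^ n : ℝ)) - (2 * t) ^ 2) / (2 * (2 ^ n : ℝ) ^ 2) := by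
      field_simp
      ring
    rw [expand]
    exact div_nonneg (by linarith [key]) (by positivity)
  rw [hMM, Complex.div_natCast_re, Complex.div_natCast_re]
  push_cast
  exact final
end
end
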